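/- arXiv:2205.01266 — 2 statements merged into one kernel-verified Lean document; each statement's English description precedes it below -/
import Mathlib

section
/- Let (W,S) be any Coxeter system, J ⊆ S, and ξ ∈ W. The map ρ_ξ : W_J → W defined by ρ_ξ(u) = uξ⁻¹ is a convex embedding with respect to the (left) weak orders if and only if ξ ∈ W^J. -/
open List

namespace CvxAux

open CoxeterSystem

set_option linter.unusedSectionVars false
variable {B : Type*} {W : Type*} [Group W] {M : CoxeterMatrix B} (cs : CoxeterSystem M W)

local prefix:100 "s" => cs.simple
local prefix:100 "π" => cs.wordProd
local prefix:100 "ℓ" => cs.length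

open scoped Classical in
/-- sign of occurrences of `t` in `l` -/
noncomputable def csgn (l : List W) (t : W) : ℤˣ :=
  (l.map (fun u => if u = t then (-1 : ℤˣ) else 1)).prod

open scoped Classical

theorem csgn_nil (t : W) : csgn ([] : List W) t = 1 := rfl

theorem csgn_cons (a : W) (l : List W) (t : W) :
    csgn (a :: l) t = (if a = t then (-1 : ℤˣ) else 1) * csgn l t := by
  simp [csgn]

theorem csgn_append (l l' : List W) (t : W) :
    csgn (l ++ l') t = csgn l t * csgn l' t := by
  simp [csgn]

theorem csgn_singleton (a t : W) : csgn [a] t = if a = t then (-1 : ℤˣ) else 1 := by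
  simp [csgn]

theorem csgn_reverse (l : List W) (t : W) : csgn l.reverse t = csgn l t := by
  simp [csgn, List.prod_reverse]

theorem csgn_eq_one_of_not_mem {l : List W} {t : W} (h : t ∉ l) : csgn l t = 1 := by
  unfold csgn
  apply List.prod_eq_one
  intro x hx
  obtain ⟨u, hu, rfl⟩ := List.mem_map.mp hx
  rw [if_neg]
  rintro rfl
  exact h hu

theorem mem_of_csgn_eq_neg_one {l : List W} {t : W} (h : csgn l t = -1) : t ∈ l := by
  by_contra hn
  rw [csgn_eq_one_of_not_mem hn] at h
  exact absurd h (by decide)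

/-- The building block of the parity (Tits) representation. -/
noncomputable def eta (i : B) (p : W × ℤˣ) : W × ℤˣ :=
  (s i * p.1 * s i, if p.1 = s i then -p.2 else p.2)

theorem eta_involutive (i : B) : Function.Involutive (eta cs i) := by
  rintro ⟨t, ε⟩
  simp only [eta]
  by_cases h : t = s i
  · subst h
    simp [cs.simple_mul_simple_cancel_left, cs.simple_mul_simple_cancel_right,
      cs.simple_mul_simple_self]
  · have h2 : s i * t * s i ≠ s i := by
      intro hc
      apply h
      have : s i * (s i * t * s i) * s i = s i * s i * s i := by rw [hc]
      simpa [mul_assoc, cs.simple_mul_simple_self, cs.simple_mul_simple_cancel_left,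
        cs.simple_mul_simple_cancel_right] using this
    simp only [if_neg h, if_neg h2, Prod.mk.injEq]
    constructor
    · calc s i * (s i * t * s i) * s i = s i * (s i * (t * (s i * s i))) := by group
        _ = t := by rw [cs.simple_mul_simple_self]; rw [mul_one, cs.simple_mul_simple_cancel_left]
    · trivial

/-- The parity representation generators, as permutations. -/
noncomputable def etaPerm (i : B) : Equiv.Perm (W × ℤˣ) := (eta_involutive cs i).toPerm

theorem etaPerm_apply (i : B) (p : W × ℤˣ) : etaPerm cs i p = eta cs i p := rfl

theorem rightInvSeq_cons (i : B) (ω : List B) :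
    cs.rightInvSeq (i :: ω) = ((π ω)⁻¹ * s i * π ω) :: cs.rightInvSeq ω := rfl

/-- Evaluation of a product of `etaPerm`s along a word. -/
theorem prod_map_etaPerm (ω : List B) (t : W) (ε : ℤˣ) :
    (ω.map (etaPerm cs)).prod (t, ε) =
      (π ω * t * (π ω)⁻¹, csgn (cs.rightInvSeq ω) t * ε) := by
  induction ω with
  | nil => simp [csgn_nil]
  | cons i ω ih =>
    rw [List.map_cons, List.prod_cons, Equiv.Perm.mul_apply, ih, etaPerm_apply, eta]
    rw [rightInvSeq_cons, csgn_cons]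
    have hcond : (π ω * t * (π ω)⁻¹ = s i) ↔ ((π ω)⁻¹ * s i * π ω = t) := by
      constructor
      · intro h; rw [← h]; group
      · intro h; rw [← h]; group
    have hw : s i * (π ω * t * (π ω)⁻¹) * s i
        = π (i :: ω) * t * (π (i :: ω))⁻¹ := by
      rw [cs.wordProd_cons]
      rw [mul_inv_rev, cs.inv_simple]
      group
    by_cases h : π ω * t * (π ω)⁻¹ = s i
    · rw [if_pos h, if_pos (hcond.mp h), hw]
      simp [mul_assoc]
    · rw [if_neg h, if_neg (fun hc => h (hcond.mpr hc)), hw]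
      simp [mul_assoc]

end CvxAux
namespace CvxAux
open CoxeterSystem List
set_option linter.unusedSectionVars false

section DihedralHelpers
variable {G : Type*} [Group G] {a b : G}

theorem invol_conj_pow (ha : a * a = 1) (hb : b * b = 1) (k : ℕ) :
    b * (a * b) ^ k * b = ((a * b) ^ k)⁻¹ := by
  have hainv : a⁻¹ = a := inv_eq_of_mul_eq_one_right ha
  have hbinv : b⁻¹ = b := inv_eq_of_mul_eq_one_right hb
  have hqinv : (a * b)⁻¹ = b * a := by rw [mul_inv_rev, hainv, hbinv]
  induction k with
  | zero => rw [pow_zero, mul_one, hb, inv_one]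
  | succ k ih =>
    have key : b * (a * b) ^ (k + 1) * b = (b * (a * b) ^ k * b) * (b * (a * b) * b) := by
      rw [pow_succ]
      have h1 : (b * (a * b) ^ k * b) * (b * (a * b) * b)
          = b * (a * b) ^ k * (b * b) * (a * b) * b := by group
      rw [h1, hb, mul_one]
      group
    rw [key, ih]
    have h2 : b * (a * b) * b = (a * b)⁻¹ := by
      rw [hqinv]
      have h3 : b * (a * b) * b = b * a * (b * b) := by group
      rw [h3, hb, mul_one]
    rw [h2, pow_succ']
    generalize a * b = q
    group

theorem invol_mul_pow (ha : a * a = 1) (hb : b * b = 1) (k : ℕ) :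
    b * (a * b) ^ k = ((a * b) ^ k)⁻¹ * b := by
  have h1 : b * (a * b) ^ k = (b * (a * b) ^ k * b) * b := by
    have : (b * (a * b) ^ k * b) * b = b * (a * b) ^ k * (b * b) := by group
    rw [this, hb, mul_one]
  rw [h1, invol_conj_pow ha hb k]

theorem invol_head_even (ha : a * a = 1) (hb : b * b = 1) (k : ℕ) :
    ((a * b) ^ k)⁻¹ * b * (a * b) ^ k = b * (a * b) ^ (k + k) := by
  rw [mul_assoc, invol_mul_pow ha hb k, invol_mul_pow ha hb (k + k)]
  generalize a * b = q
  group

theorem invol_head_odd (ha : a * a = 1) (hb : b * b = 1) (k : ℕ) :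
    (b * (a * b) ^ k)⁻¹ * a * (b * (a * b) ^ k) = b * (a * b) ^ (k + 1 + k) := by
  have hainv : a⁻¹ = a := inv_eq_of_mul_eq_one_right ha
  have hbinv : b⁻¹ = b := inv_eq_of_mul_eq_one_right hb
  have hqinv : (a * b)⁻¹ = b * a := by rw [mul_inv_rev, hainv, hbinv]
  have h1 : (b * (a * b) ^ k)⁻¹ * a * (b * (a * b) ^ k)
      = ((a * b) ^ k)⁻¹ * (b * a) * (b * (a * b) ^ k) := by
    rw [mul_inv_rev, hbinv]
    group
  rw [h1, ← hqinv, invol_mul_pow ha hb k, invol_mul_pow ha hb (k + 1 + k)]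
  generalize a * b = q
  group

end DihedralHelpers

variable {B : Type*} {W : Type*} [Group W] {M : CoxeterMatrix B} (cs : CoxeterSystem M W)
local prefix:100 "s" => cs.simple
local prefix:100 "π" => cs.wordProd
local prefix:100 "ℓ" => cs.length
open scoped Classical

theorem map_prod_alternatingWord {G : Type*} [Monoid G] (F : B → G) (i j : B) (n : ℕ) :
    ((alternatingWord i j (2 * n)).map F).prod = (F i * F j) ^ n := by
  induction n with
  | zero => simp [alternatingWord]
  | succ n ih =>
    have h1 : 2 * (n + 1) = (2 * n + 1) + 1 := by ring
    rw [h1, alternatingWord_succ' i j, alternatingWord_succ' i j]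
    have h2 : ¬ Even (2 * n + 1) := by simp [Nat.even_add_one]
    have h3 : Even (2 * n) := even_two_mul n
    rw [if_neg h2, if_pos h3]
    rw [List.map_cons, List.map_cons, List.prod_cons, List.prod_cons, ih,
      ← mul_assoc, pow_succ']

theorem ris_alternatingWord (i j : B) (n : ℕ) :
    cs.rightInvSeq (alternatingWord i j n) =
      ((List.range n).reverse).map (fun k => s j * (s i * s j) ^ k) := by
  have ha := cs.simple_mul_simple_self i
  have hb := cs.simple_mul_simple_self j
  induction n with
  | zero => simp [alternatingWord]
  | succ n ih =>
    rw [alternatingWord_succ' i j, rightInvSeq_cons, ih]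
    rw [List.range_succ, List.reverse_append, List.reverse_singleton]
    rw [List.singleton_append, List.map_cons]
    congr 1
    rw [cs.prod_alternatingWord_eq_mul_pow]
    by_cases hn : Even n
    · rw [if_pos hn, if_pos hn, one_mul]
      obtain ⟨k, hk⟩ := hn
      have h2 : n / 2 = k := by omega
      rw [h2, hk, invol_head_even ha hb k]
    · rw [if_neg hn, if_neg hn]
      obtain ⟨k, hk⟩ := Nat.odd_iff.mpr (Nat.not_even_iff.mp hn)
      have h2 : n / 2 = k := by omega
      rw [h2, invol_head_odd ha hb k, (by omega : k + 1 + k = n)]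

theorem csgn_ris_alternating (i j : B) (t : W) :
    csgn (cs.rightInvSeq (alternatingWord i j (2 * M i j))) t = 1 := by
  rw [ris_alternatingWord, List.map_reverse, csgn_reverse]
  have hrange : List.range (2 * M i j)
      = List.range (M i j) ++ (List.range (M i j)).map (M i j + ·) := by
    rw [two_mul, List.range_add]
  rw [hrange, List.map_append, csgn_append]
  have hmapeq : ((List.range (M i j)).map (M i j + ·)).map
        (fun k => s j * (s i * s j) ^ k)
      = (List.range (M i j)).map (fun k => s j * (s i * s j) ^ k) := by
    rw [List.map_map]
    apply List.map_congr_left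
    intro k _
    show s j * (s i * s j) ^ (M i j + k) = s j * (s i * s j) ^ k
    rw [pow_add, cs.simple_mul_simple_pow i j, one_mul]
  rw [hmapeq]
  exact Int.units_mul_self _

theorem etaPerm_liftable : CoxeterMatrix.IsLiftable M (etaPerm cs) := by
  intro i j
  by_cases h0 : M i j = 0
  · rw [h0, pow_zero]
  · have hprod : (etaPerm cs i * etaPerm cs j) ^ M i j
        = ((alternatingWord i j (2 * M i j)).map (etaPerm cs)).prod := by
      rw [map_prod_alternatingWord]
    apply Equiv.ext
    rintro ⟨t, ε⟩
    rw [hprod, prod_map_etaPerm]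
    have hπ : π (alternatingWord i j (2 * M i j)) = 1 := by
      rw [cs.prod_alternatingWord_eq_mul_pow, if_pos (even_two_mul _),
        Nat.mul_div_cancel_left _ (by norm_num), one_mul, cs.simple_mul_simple_pow]
    rw [hπ, csgn_ris_alternating]
    simp

/-- The parity representation of the Coxeter group. -/
noncomputable def phi : W →* Equiv.Perm (W × ℤˣ) := cs.lift ⟨etaPerm cs, etaPerm_liftable cs⟩

theorem phi_wordProd (ω : List B) : phi cs (π ω) = (ω.map (etaPerm cs)).prod := by
  unfold CoxeterSystem.wordProd
  rw [MonoidHom.map_list_prod, List.map_map]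
  congr 1
  apply List.map_congr_left
  intro b _
  simp only [Function.comp_apply]
  exact cs.lift_apply_simple (etaPerm_liftable cs) b

theorem csgn_ris_welldef {ω ω' : List B} (h : π ω = π ω') (t : W) :
    csgn (cs.rightInvSeq ω) t = csgn (cs.rightInvSeq ω') t := by
  have h1 := prod_map_etaPerm cs ω t 1
  have h2 := prod_map_etaPerm cs ω' t 1
  rw [← phi_wordProd] at h1 h2
  rw [h] at h1
  rw [h1] at h2
  have := congrArg Prod.snd h2
  simpa using this

end CvxAux
namespace CvxAux
open CoxeterSystem List
set_option linter.unusedSectionVars false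
variable {B : Type*} {W : Type*} [Group W] {M : CoxeterMatrix B} (cs : CoxeterSystem M W)
local prefix:100 "s" => cs.simple
local prefix:100 "π" => cs.wordProd
local prefix:100 "ℓ" => cs.length
open scoped Classical

theorem csgn_map_conj_simple (l : List W) (i : B) :
    csgn (l.map (MulAut.conj (s i))) (s i) = csgn l (s i) := by
  unfold csgn
  rw [List.map_map]
  congr 1
  apply List.map_congr_left
  intro u _
  simp only [Function.comp_apply, MulAut.conj_apply]
  have hiff : s i * u * (s i)⁻¹ = s i ↔ u = s i := by
    rw [cs.inv_simple]
    constructor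
    · intro h
      have := congrArg (fun x => s i * x * s i) h
      simpa [mul_assoc, cs.simple_mul_simple_cancel_left,
        cs.simple_mul_simple_cancel_right, cs.simple_mul_simple_self] using this
    · rintro rfl
      rw [cs.simple_mul_simple_self, one_mul]
  by_cases h : u = s i
  · rw [if_pos h]; exact if_pos (hiff.mpr h)
  · rw [if_neg h]; exact if_neg (fun hc => h (hiff.mp hc))

/-- If `s i` is a right descent of `π ω`, the sign of `s i` in the right inversion
sequence of `ω` is `-1`. -/
theorem csgn_ris_of_descent {v : W} {i : B} (h : ℓ (v * s i) < ℓ v)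
    {ω : List B} (hω : π ω = v) :
    csgn (cs.rightInvSeq ω) (s i) = -1 := by
  obtain ⟨τ, hτred, hτ⟩ := cs.exists_reduced_word' (v * s i)
  have hπ : π (τ.concat i) = v := by
    rw [cs.wordProd_concat, ← hτ, cs.simple_mul_simple_cancel_right]
  have hwd := csgn_ris_welldef cs (hω.trans hπ.symm) (s i)
  rw [hwd, cs.rightInvSeq_concat, concat_eq_append, csgn_append,
    csgn_map_conj_simple, csgn_singleton, if_pos rfl]
  have hone : csgn (cs.rightInvSeq τ) (s i) = 1 := by
    rcases Int.units_eq_one_or (csgn (cs.rightInvSeq τ) (s i)) with h1 | h1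
    · exact h1
    · exfalso
      have hmem := mem_of_csgn_eq_neg_one h1
      have hinv := cs.isRightInversion_of_mem_rightInvSeq hτred hmem
      have hlt := hinv.2
      rw [← hτ, cs.simple_mul_simple_cancel_right] at hlt
      omega
  rw [hone, one_mul]

/-- The (simple) exchange property, valid for arbitrary words. -/
theorem exchange {ω : List B} {i : B} (h : ℓ (π ω * s i) < ℓ (π ω)) :
    ∃ k < ω.length, π ω * s i = π (ω.eraseIdx k) := by
  have hsgn := csgn_ris_of_descent cs h (rfl : π ω = π ω)
  have hmem := mem_of_csgn_eq_neg_one hsgn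
  obtain ⟨k, hk, hke⟩ := List.getElem_of_mem hmem
  have hk' : k < ω.length := by
    have := cs.length_rightInvSeq ω
    omega
  refine ⟨k, hk', ?_⟩
  have := cs.wordProd_mul_getD_rightInvSeq ω k
  rw [List.getD_eq_getElem _ _ hk, hke] at this
  exact this

section Parabolic
variable (J : Set B)

theorem word_mem_closure {ω : List B} (hω : ∀ b ∈ ω, b ∈ J) :
    π ω ∈ Subgroup.closure (cs.simple '' J) := by
  induction ω with
  | nil => rw [cs.wordProd_nil]; exact one_mem _
  | cons b ω ih =>
    rw [cs.wordProd_cons]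
    exact mul_mem (Subgroup.subset_closure ⟨b, hω b List.mem_cons_self, rfl⟩)
      (ih fun c hc => hω c (List.mem_cons_of_mem b hc))

theorem mem_closure_word {w : W} (hw : w ∈ Subgroup.closure (cs.simple '' J)) :
    ∃ ω : List B, (∀ b ∈ ω, b ∈ J) ∧ w = π ω := by
  induction hw using Subgroup.closure_induction with
  | mem x hx =>
    obtain ⟨b, hb, rfl⟩ := hx
    exact ⟨[b], by simpa using hb, by simp⟩
  | one => exact ⟨[], by simp, by simp⟩
  | mul x y _ _ ihx ihy =>
    obtain ⟨ω₁, h₁, rfl⟩ := ihx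
    obtain ⟨ω₂, h₂, rfl⟩ := ihy
    refine ⟨ω₁ ++ ω₂, ?_, by rw [cs.wordProd_append]⟩
    intro b hb
    rcases List.mem_append.mp hb with h | h
    · exact h₁ b h
    · exact h₂ b h
  | inv x _ ihx =>
    obtain ⟨ω, h₁, rfl⟩ := ihx
    exact ⟨ω.reverse, fun b hb => h₁ b (List.mem_reverse.mp hb), by
      rw [cs.wordProd_reverse]⟩

theorem mem_closure_reduced_word {w : W} (hw : w ∈ Subgroup.closure (cs.simple '' J)) :
    ∃ ω : List B, (∀ b ∈ ω, b ∈ J) ∧ cs.IsReduced ω ∧ w = π ω := by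
  obtain ⟨ω, hmem, rfl⟩ := mem_closure_word cs J hw
  clear hw
  induction ω using List.reverseRecOn with
  | nil => exact ⟨[], by simp, by simp [CoxeterSystem.IsReduced], rfl⟩
  | append_singleton ω i ih =>
    obtain ⟨τ, hτJ, hτred, hτ⟩ := ih fun b hb => hmem b (List.mem_append_left _ hb)
    have hiJ : i ∈ J := hmem i (List.mem_append_right _ (List.mem_singleton_self i))
    have hππ : π (ω ++ [i]) = π τ * s i := by
      rw [cs.wordProd_append, hτ, cs.wordProd_singleton]
    rcases cs.length_mul_simple (π τ) i with hcase | hcase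
    · refine ⟨τ ++ [i], ?_, ?_, by
        rw [cs.wordProd_append, cs.wordProd_singleton, hτ, cs.wordProd_append, cs.wordProd_singleton]⟩
      · intro b hb
        rcases List.mem_append.mp hb with h | h
        · exact hτJ b h
        · rw [List.mem_singleton.mp h]; exact hiJ
      · show ℓ (π (τ ++ [i])) = (τ ++ [i]).length
        rw [cs.wordProd_append, cs.wordProd_singleton, hcase, List.length_append,
          List.length_singleton]
        have h6 : ℓ (π τ) = τ.length := hτred
        omega
    · have hlt : ℓ (π τ * s i) < ℓ (π τ) := by omega
      obtain ⟨k, hk, hke⟩ := exchange cs hlt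
      refine ⟨τ.eraseIdx k, ?_, ?_, by rw [hππ, hke]⟩
      · intro b hb
        exact hτJ b ((τ.eraseIdx_sublist k).mem hb)
      · show ℓ (π (τ.eraseIdx k)) = (τ.eraseIdx k).length
        rw [← hke]
        have h5 := List.length_eraseIdx_add_one hk
        have h6 : ℓ (π τ) = τ.length := hτred
        omega

theorem closure_desc {c : W} (hc : c ∈ Subgroup.closure (cs.simple '' J)) (hne : c ≠ 1) :
    ∃ i ∈ J, ∃ τ : List B, (∀ b ∈ τ, b ∈ J) ∧ cs.IsReduced τ ∧ c = π τ * s i ∧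
      τ.length + 1 = ℓ c := by
  obtain ⟨ω, hωJ, hωred, hω⟩ := mem_closure_reduced_word cs J hc
  rcases List.eq_nil_or_concat ω with rfl | ⟨τ, i, rfl⟩
  · exact absurd (by simpa using hω) hne
  · have hiJ : i ∈ J := hωJ i (by simp)
    refine ⟨i, hiJ, τ, fun b hb => hωJ b (by simp [hb]), ?_, ?_, ?_⟩
    · have := hωred.take τ.length
      rwa [List.concat_eq_append, List.take_left] at this
    · rw [hω, List.concat_eq_append, cs.wordProd_append, cs.wordProd_singleton]
    · have h1 : ℓ c = (τ.concat i).length := by rw [hω]; exact hωred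
      simp only [List.concat_eq_append, List.length_append, List.length_singleton] at h1
      omega

end Parabolic
end CvxAux
namespace CvxAux
open CoxeterSystem List
set_option linter.unusedSectionVars false

theorem eraseIdx_append_left' {α : Type*} (l₁ l₂ : List α) {k : ℕ} (h : k < l₁.length) :
    (l₁ ++ l₂).eraseIdx k = l₁.eraseIdx k ++ l₂ := by
  induction l₁ generalizing k with
  | nil => simp at h
  | cons a t ih =>
    cases k with
    | zero => simp [List.eraseIdx]
    | succ k =>
      simp only [List.cons_append, List.eraseIdx_cons_succ]
      rw [ih (by simpa using h)]

theorem eraseIdx_append_right' {α : Type*} (l₁ l₂ : List α) {k : ℕ} (h : l₁.length ≤ k) :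
    (l₁ ++ l₂).eraseIdx k = l₁ ++ l₂.eraseIdx (k - l₁.length) := by
  induction l₁ generalizing k with
  | nil => simp
  | cons a t ih =>
    cases k with
    | zero => simp at h
    | succ k =>
      simp only [List.cons_append, List.eraseIdx_cons_succ, List.length_cons]
      rw [ih (by simpa using h)]
      simp only [Nat.succ_sub_succ]

variable {B : Type*} {W : Type*} [Group W] {M : CoxeterMatrix B} (cs : CoxeterSystem M W)
local prefix:100 "s" => cs.simple
local prefix:100 "π" => cs.wordProd
local prefix:100 "ℓ" => cs.length
open scoped Classical

variable (J : Set B)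

theorem factor_mem_closure : ∀ {v q r : W}, v ∈ Subgroup.closure (cs.simple '' J) →
    v = q * r → ℓ v = ℓ q + ℓ r →
    q ∈ Subgroup.closure (cs.simple '' J) ∧ r ∈ Subgroup.closure (cs.simple '' J) := by
  suffices H : ∀ n : ℕ, ∀ v q r : W, v ∈ Subgroup.closure (cs.simple '' J) →
      v = q * r → ℓ v = ℓ q + ℓ r → ℓ r = n →
      q ∈ Subgroup.closure (cs.simple '' J) ∧ r ∈ Subgroup.closure (cs.simple '' J) by
    intro v q r hv hqr hadd
    exact H (ℓ r) v q r hv hqr hadd rfl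
  intro n
  induction n using Nat.strong_induction_on with
  | _ n ih =>
    intro v q r hv hqr hadd hn
    by_cases hr1 : r = 1
    · subst hr1
      have hq : q = v := by rw [hqr, mul_one]
      subst hq
      exact ⟨hv, one_mem _⟩
    · obtain ⟨i, hi⟩ := cs.exists_rightDescent_of_ne_one hr1
      have hlt : ℓ (r * s i) < ℓ r := hi
      have hdich := cs.length_mul_simple r i
      have hri : ℓ (r * s i) + 1 = ℓ r := by omega
      have hvs_le : ℓ (v * s i) ≤ ℓ q + ℓ (r * s i) := by
        rw [hqr, mul_assoc]
        exact cs.length_mul_le q (r * s i)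
      have hv_le : ℓ v ≤ ℓ (v * s i) + 1 := by
        have h2 := cs.length_mul_le (v * s i) (s i)
        rw [cs.simple_mul_simple_cancel_right, cs.length_simple] at h2
        omega
      have hlt2 : ℓ (v * s i) < ℓ v := by omega
      obtain ⟨τ, hτJ, hτred, hτ⟩ := mem_closure_reduced_word cs J hv
      have hlt3 : ℓ (π τ * s i) < ℓ (π τ) := by rw [← hτ]; exact hlt2
      obtain ⟨k, hk, hke⟩ := exchange cs hlt3
      have hvsiP : v * s i ∈ Subgroup.closure (cs.simple '' J) := by
        rw [hτ, hke]
        exact word_mem_closure cs J fun b hb => hτJ b ((τ.eraseIdx_sublist k).mem hb)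
      have hsiP : s i ∈ Subgroup.closure (cs.simple '' J) := by
        have h3 := mul_mem (inv_mem hv) hvsiP
        rwa [← mul_assoc, inv_mul_cancel, one_mul] at h3
      have h1 : v * s i = q * (r * s i) := by rw [hqr, mul_assoc]
      have hadd2 : ℓ (v * s i) = ℓ q + ℓ (r * s i) := by omega
      obtain ⟨hqP, hrsP⟩ := ih (ℓ (r * s i)) (by omega) (v * s i) q (r * s i) hvsiP h1 hadd2 rfl
      refine ⟨hqP, ?_⟩
      have h4 := mul_mem hrsP hsiP
      rwa [cs.simple_mul_simple_cancel_right] at h4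

theorem min_additive {m : W} (hmin : ∀ d ∈ Subgroup.closure (cs.simple '' J), ℓ m ≤ ℓ (m * d)) :
    ∀ c ∈ Subgroup.closure (cs.simple '' J), ℓ (m * c) = ℓ m + ℓ c := by
  suffices H : ∀ n : ℕ, ∀ c ∈ Subgroup.closure (cs.simple '' J), ℓ c = n →
      ℓ (m * c) = ℓ m + ℓ c by
    intro c hc
    exact H (ℓ c) c hc rfl
  intro n
  induction n using Nat.strong_induction_on with
  | _ n ih =>
    intro c hc hn
    by_cases hc1 : c = 1
    · subst hc1; simp
    · obtain ⟨i, hiJ, τ, hτJ, hτred, hcf, hlen⟩ := closure_desc cs J hc hc1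
      have hπτP : π τ ∈ Subgroup.closure (cs.simple '' J) := word_mem_closure cs J hτJ
      have hτlen : ℓ (π τ) = τ.length := hτred
      have hadd' : ℓ (m * π τ) = ℓ m + ℓ (π τ) :=
        ih (ℓ (π τ)) (by omega) (π τ) hπτP rfl
      have hmc : m * c = m * π τ * s i := by rw [hcf, ← mul_assoc]
      rcases cs.length_mul_simple (m * π τ) i with hca | hca
      · rw [hmc, hca, hadd']
        omega
      · exfalso
        have hlt : ℓ (m * π τ * s i) < ℓ (m * π τ) := by omega
        obtain ⟨ρ, hρred, hρ⟩ := cs.exists_reduced_word' m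
        have hσ : π (ρ ++ τ) = m * π τ := by rw [cs.wordProd_append, ← hρ]
        have hlt4 : ℓ (π (ρ ++ τ) * s i) < ℓ (π (ρ ++ τ)) := by rw [hσ]; exact hlt
        obtain ⟨k, hk, hke⟩ := exchange cs hlt4
        rw [hσ] at hke
        rw [List.length_append] at hk
        by_cases hkρ : k < ρ.length
        · rw [eraseIdx_append_left' _ _ hkρ, cs.wordProd_append] at hke
          have hd : m * (π τ * s i * (π τ)⁻¹) = π (ρ.eraseIdx k) := by
            have h5 := congrArg (fun x => x * (π τ)⁻¹) hke
            simp only [mul_assoc, mul_inv_cancel, mul_one] at h5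
            rw [← h5]
            group
          have hdP : π τ * s i * (π τ)⁻¹ ∈ Subgroup.closure (cs.simple '' J) :=
            mul_mem (mul_mem hπτP (Subgroup.subset_closure ⟨i, hiJ, rfl⟩)) (inv_mem hπτP)
          have h5 := hmin _ hdP
          rw [hd] at h5
          have h6 : ℓ (π (ρ.eraseIdx k)) ≤ (ρ.eraseIdx k).length := cs.length_wordProd_le _
          have h7 := List.length_eraseIdx_add_one hkρ
          have h8 : ℓ m = ρ.length := by rw [hρ]; exact hρred
          omega
        · have hkτ : k - ρ.length < τ.length := by omega
          rw [eraseIdx_append_right' _ _ (le_of_not_gt hkρ), cs.wordProd_append, ← hρ] at hke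
          rw [mul_assoc] at hke
          have h9 : π τ * s i = π (τ.eraseIdx (k - ρ.length)) := mul_left_cancel hke
          have h10 : ℓ (π τ * s i) ≤ (τ.eraseIdx (k - ρ.length)).length := by
            rw [h9]; exact cs.length_wordProd_le _
          have h11 := List.length_eraseIdx_add_one hkτ
          have h12 : ℓ c = ℓ (π τ * s i) := by rw [hcf]
          omega

theorem star {ξ : W} (hξ : ∀ i ∈ J, ℓ ξ < ℓ (ξ * s i)) :
    ∀ c ∈ Subgroup.closure (cs.simple '' J), ℓ (ξ * c) = ℓ ξ + ℓ c := by
  have hne : {n | ∃ c ∈ Subgroup.closure (cs.simple '' J), ℓ (ξ * c) = n}.Nonempty :=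
    ⟨ℓ (ξ * 1), 1, one_mem _, rfl⟩
  obtain ⟨c₀, hc₀, hval⟩ := Nat.sInf_mem hne
  have hminc : ∀ d ∈ Subgroup.closure (cs.simple '' J), ℓ (ξ * c₀) ≤ ℓ (ξ * c₀ * d) := by
    intro d hd
    have h2 : ℓ (ξ * (c₀ * d)) ∈ {n | ∃ c ∈ Subgroup.closure (cs.simple '' J), ℓ (ξ * c) = n} :=
      ⟨c₀ * d, mul_mem hc₀ hd, rfl⟩
    have h3 := Nat.sInf_le h2
    rw [← mul_assoc] at h3
    omega
  have hA := min_additive cs J hminc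
  by_cases h1 : c₀ = 1
  · subst h1
    intro c hc
    have := hA c hc
    rwa [mul_one] at this
  · exfalso
    have hinv : c₀⁻¹ ∈ Subgroup.closure (cs.simple '' J) := inv_mem hc₀
    have hinvne : c₀⁻¹ ≠ 1 := fun h => h1 (by rwa [inv_eq_one] at h)
    obtain ⟨i, hiJ, τ, hτJ, hτred, hcf, hlen⟩ := closure_desc cs J hinv hinvne
    have hπτP : π τ ∈ Subgroup.closure (cs.simple '' J) := word_mem_closure cs J hτJ
    have e1 : ℓ (ξ * c₀ * c₀⁻¹) = ℓ (ξ * c₀) + ℓ c₀⁻¹ := hA _ hinv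
    rw [mul_inv_cancel_right] at e1
    have e2 : ℓ (ξ * c₀ * π τ) = ℓ (ξ * c₀) + ℓ (π τ) := hA _ hπτP
    have e3 : ξ * c₀ * π τ = ξ * s i := by
      have hc₀eq : c₀ = s i * (π τ)⁻¹ := by
        have := congrArg (fun x => x⁻¹) hcf
        simpa [mul_inv_rev, cs.inv_simple] using this
      rw [hc₀eq]
      group
    rw [e3] at e2
    have h6 : ℓ (π τ) = τ.length := hτred
    have hξi := hξ i hiJ
    omega

end CvxAux

/-- The left weak order on a Coxeter group: `u ≤ v` iff `ℓ(v) = ℓ(u) + ℓ(v u⁻¹)`. -/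
def CoxeterSystem.weakLE {B : Type*} {W : Type*} [Group W] {M : CoxeterMatrix B}
    (cs : CoxeterSystem M W) (u v : W) : Prop :=
  cs.length v = cs.length u + cs.length (v * u⁻¹)

/-- For a Coxeter system `(W,S)`, `J ⊆ S` and `ξ ∈ W`, the map
`ρ_ξ : W_J → W`, `u ↦ u ξ⁻¹`, is a convex embedding for the weak orders iff
`ξ ∈ W^J = {w : ℓ(w) < ℓ(w s) for all s ∈ J}`. -/
theorem convex_embedding_iff_min_coset_rep {B : Type*} {W : Type*} [Group W]
    {M : CoxeterMatrix B} (cs : CoxeterSystem M W) (J : Set B) (ξ : W) :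
    (Set.InjOn (fun u => u * ξ⁻¹)
        (Subgroup.closure (cs.simple '' J) : Subgroup W) ∧
     (∀ u ∈ (Subgroup.closure (cs.simple '' J) : Subgroup W),
       ∀ v ∈ (Subgroup.closure (cs.simple '' J) : Subgroup W),
        (cs.weakLE u v ↔ cs.weakLE (u * ξ⁻¹) (v * ξ⁻¹))) ∧
     (∀ u ∈ (Subgroup.closure (cs.simple '' J) : Subgroup W),
       ∀ v ∈ (Subgroup.closure (cs.simple '' J) : Subgroup W),
        ∀ x : W, cs.weakLE (u * ξ⁻¹) x → cs.weakLE x (v * ξ⁻¹) →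
          ∃ b ∈ (Subgroup.closure (cs.simple '' J) : Subgroup W), x = b * ξ⁻¹))
    ↔ ∀ i ∈ J, cs.length ξ < cs.length (ξ * cs.simple i) := by
  constructor
  · rintro ⟨-, h2, -⟩
    intro i hiJ
    have hsi : cs.simple i ∈ Subgroup.closure (cs.simple '' J) :=
      Subgroup.subset_closure ⟨i, hiJ, rfl⟩
    have hwl : cs.weakLE 1 (cs.simple i) := by
      simp [CoxeterSystem.weakLE]
    have hres := (h2 1 (one_mem _) (cs.simple i) hsi).mp hwl
    simp only [CoxeterSystem.weakLE, one_mul] at hres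
    have ha : cs.simple i * ξ⁻¹ * (ξ⁻¹)⁻¹ = cs.simple i := by group
    rw [ha, cs.length_inv, cs.length_simple] at hres
    have hb : cs.length (ξ * cs.simple i) = cs.length (cs.simple i * ξ⁻¹) := by
      rw [← cs.length_inv (ξ * cs.simple i), mul_inv_rev, cs.inv_simple]
    omega
  · intro hξ
    have hstar := CvxAux.star cs J hξ
    have hstar' : ∀ u ∈ Subgroup.closure (cs.simple '' J),
        cs.length (u * ξ⁻¹) = cs.length u + cs.length ξ := by
      intro u hu
      have h1 : cs.length (u * ξ⁻¹) = cs.length (ξ * u⁻¹) := by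
        rw [← cs.length_inv (u * ξ⁻¹), mul_inv_rev, inv_inv]
      rw [h1, hstar u⁻¹ (inv_mem hu), cs.length_inv]
      omega
    refine ⟨?_, ?_, ?_⟩
    · intro a _ b _ hab
      exact mul_right_cancel hab
    · intro u hu v hv
      simp only [CoxeterSystem.weakLE]
      have e1 : v * ξ⁻¹ * (u * ξ⁻¹)⁻¹ = v * u⁻¹ := by group
      rw [e1, hstar' u hu, hstar' v hv]
      omega
    · intro u hu v hv x hux hxv
      refine ⟨x * ξ, ?_, by group⟩
      simp only [CoxeterSystem.weakLE] at hux hxv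
      have e1 : x * (u * ξ⁻¹)⁻¹ = (x * ξ) * u⁻¹ := by group
      have e2 : v * ξ⁻¹ * x⁻¹ = v * (x * ξ)⁻¹ := by group
      rw [e1, hstar' u hu] at hux
      rw [e2, hstar' v hv] at hxv
      have hble : cs.length (x * ξ) ≤ cs.length ((x * ξ) * u⁻¹) + cs.length u := by
        have h3 := cs.length_mul_le ((x * ξ) * u⁻¹) u
        rwa [inv_mul_cancel_right] at h3
      have hvle : cs.length v ≤ cs.length (v * (x * ξ)⁻¹) + cs.length (x * ξ) := by
        have h3 := cs.length_mul_le (v * (x * ξ)⁻¹) (x * ξ)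
        rwa [inv_mul_cancel_right] at h3
      have hadd : cs.length v = cs.length (v * (x * ξ)⁻¹) + cs.length (x * ξ) := by omega
      have hfac : v = (v * (x * ξ)⁻¹) * (x * ξ) := by group
      exact (CvxAux.factor_mem_closure cs J hv hfac hadd).2
end

section
/- Let u ≤ v in the weak order on B_n. Then for any integers i, j with 1 ≤ i < j ≤ n, sts(u_i u_{i+1}⋯u_j) ≤ sts(v_i v_{i+1}⋯v_j) in the weak order on B_{j−i+1}. -/
open Finset

open scoped Classical

/-- The hyperoctahedral group `𝔅ₙ`, realized as the set of those permutations `w` of `ℤ`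
that satisfy `w (-i) = - w i` for all `i` and fix every integer of absolute value `> n`.
One-line notation: `w₁ ⋯ w_n` with `w_i = w i` for `1 ≤ i ≤ n`. -/
def SignedPerm (n : ℕ) : Set (Equiv.Perm ℤ) :=
  {w | (∀ i : ℤ, w (-i) = - w i) ∧ (∀ i : ℤ, (n : ℤ) < |i| → w i = i)}

/-- The inversion set `Inv(w) = {(i,j) : 1 ≤ i < j ≤ n, w_i > w_j}`. -/
noncomputable def InvSet (n : ℕ) (w : Equiv.Perm ℤ) : Finset (ℤ × ℤ) :=
  ((Finset.Icc (1 : ℤ) (n : ℤ)) ×ˢ (Finset.Icc (1 : ℤ) (n : ℤ))).filter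
    fun p => p.1 < p.2 ∧ w p.2 < w p.1

/-- The set of negative indices `Nega(w) = {i ∈ [n] : w_i < 0}`. -/
noncomputable def NegaSet (n : ℕ) (w : Equiv.Perm ℤ) : Finset ℤ :=
  (Finset.Icc (1 : ℤ) (n : ℤ)).filter fun i => w i < 0

/-- The negative sum pair set `Nsp(w) = {(i,j) : 1 ≤ i < j ≤ n, w_i + w_j < 0}`. -/
noncomputable def NspSet (n : ℕ) (w : Equiv.Perm ℤ) : Finset (ℤ × ℤ) :=
  ((Finset.Icc (1 : ℤ) (n : ℤ)) ×ˢ (Finset.Icc (1 : ℤ) (n : ℤ))).filter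
    fun p => p.1 < p.2 ∧ w p.1 + w p.2 < 0

/-- The Coxeter length of `w ∈ 𝔅ₙ`: `ℓ(w) = #Inv(w) + #Nega(w) + #Nsp(w)`. -/
noncomputable def blen (n : ℕ) (w : Equiv.Perm ℤ) : ℕ :=
  (InvSet n w).card + (NegaSet n w).card + (NspSet n w).card

/-- The left weak order on `𝔅ₙ`: `u ≤ v` iff `ℓ(v) = ℓ(u) + ℓ(v * u⁻¹)`. -/
def wle (n : ℕ) (u v : Equiv.Perm ℤ) : Prop :=
  blen n v = blen n u + blen n (v * u⁻¹)

/-- The Coxeter generators of `𝔅ₙ`: `s₀ = (1,-1)` and `sᵢ = (i,i+1)(-i,-(i+1))` for `i ≥ 1`. -/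
def sB (i : ℕ) : Equiv.Perm ℤ :=
  if i = 0 then Equiv.swap 1 (-1)
  else Equiv.swap (i : ℤ) ((i : ℤ) + 1) * Equiv.swap (-(i : ℤ)) (-((i : ℤ) + 1))

/-- `a[p] = a + p` if `a > 0`, `a - p` if `a < 0` (and `0 ↦ 0`). -/
def shiftFun (p : ℕ) (b : ℤ) : ℤ :=
  if 0 < b then b + (p : ℤ) else if b < 0 then b - (p : ℤ) else 0

/-- `w` is the shifted product `u × v ∈ 𝔅_{p+q}` of `u ∈ 𝔅_p` and `v ∈ 𝔅_q`:
its one-line notation is `(u₁, …, u_p, v₁[p], …, v_q[p])`. -/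
def IsSProd (p q : ℕ) (u v w : Equiv.Perm ℤ) : Prop :=
  w ∈ SignedPerm (p + q) ∧
  (∀ a : ℤ, 1 ≤ a → a ≤ (p : ℤ) → w a = u a) ∧
  (∀ a : ℤ, (p : ℤ) < a → a ≤ (p : ℤ) + (q : ℤ) → w a = shiftFun p (v (a - (p : ℤ))))

/-- `ξ` is a `(p,q)`-shuffle: an element of `𝔅_{p+q}` with positive entries (a permutation)
that is increasing on each of the blocks `[1,p]` and `[p+1,p+q]`. -/
def IsShuffle (p q : ℕ) (ξ : Equiv.Perm ℤ) : Prop :=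
  ξ ∈ SignedPerm (p + q) ∧
  (∀ a : ℤ, 1 ≤ a → a ≤ (p : ℤ) + (q : ℤ) → 0 < ξ a) ∧
  (∀ a b : ℤ, 1 ≤ a → a < b → b ≤ (p : ℤ) → ξ a < ξ b) ∧
  (∀ a b : ℤ, (p : ℤ) < a → a < b → b ≤ (p : ℤ) + (q : ℤ) → ξ a < ξ b)

/-- `w` is the standard signed permutation `sts(a₁ ⋯ a_m)` of the word `a₁ ⋯ a_m = a 1, …, a m`
(of nonzero integers): the unique `w ∈ 𝔅_m` with the same negative index set and
`|w_i| < |w_j| ↔ |a_i| ≤ |a_j|` for `1 ≤ i < j ≤ m`. -/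
def IsSts (m : ℕ) (a : ℤ → ℤ) (w : Equiv.Perm ℤ) : Prop :=
  w ∈ SignedPerm m ∧
  (∀ i : ℤ, 1 ≤ i → i ≤ (m : ℤ) → (w i < 0 ↔ a i < 0)) ∧
  (∀ i j : ℤ, 1 ≤ i → i < j → j ≤ (m : ℤ) → (|w i| < |w j| ↔ |a i| ≤ |a j|))

/-- The standard signed permutation of a word, as a function. -/
noncomputable def sts (m : ℕ) (a : ℤ → ℤ) : Equiv.Perm ℤ :=
  if h : ∃ w, IsSts m a w then h.choose else 1

/-- Descent set of `w ∈ 𝔅ₙ`: `Des(w) = {i ∈ [0,n-1] : w_i > w_{i+1}}` with `w₀ = 0`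
(note `w 0 = 0` holds automatically). -/
def DesSet (n : ℕ) (w : Equiv.Perm ℤ) : Finset ℕ :=
  (Finset.range n).filter fun i => w ((i : ℤ) + 1) < w (i : ℤ)

/-- Global descent set of `u ∈ 𝔅ₙ`. -/
noncomputable def GDesSet (n : ℕ) (u : Equiv.Perm ℤ) : Finset ℕ :=
  (Finset.Ico 1 n).filter fun i =>
    ∀ j k : ℤ, 1 ≤ j → j ≤ (i : ℤ) → (i : ℤ) < k → k ≤ (n : ℤ) → u k < u j

/-- `m` is the meet (greatest lower bound) of `x` and `y` within `S`, w.r.t. the weak order. -/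
def IsMeetIn (n : ℕ) (S : Set (Equiv.Perm ℤ)) (x y m : Equiv.Perm ℤ) : Prop :=
  m ∈ S ∧ wle n m x ∧ wle n m y ∧ ∀ z ∈ S, wle n z x → wle n z y → wle n z m

/-- `j` is the join (least upper bound) of `x` and `y` within `S`, w.r.t. the weak order. -/
def IsJoinIn (n : ℕ) (S : Set (Equiv.Perm ℤ)) (x y j : Equiv.Perm ℤ) : Prop :=
  j ∈ S ∧ wle n x j ∧ wle n y j ∧ ∀ z ∈ S, wle n x z → wle n y z → wle n j z

/-- The set `𝔅_p × 𝔅_{q,K} ⊆ 𝔅_{p+q}` of shifted products `u × v` with `u ∈ 𝔅_p`,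
`v ∈ 𝔅_q`, `Nega(v) = K`. -/
def SProdComp (p q : ℕ) (K : Finset ℤ) : Set (Equiv.Perm ℤ) :=
  {w | ∃ u v : Equiv.Perm ℤ, u ∈ SignedPerm p ∧ v ∈ SignedPerm q ∧ NegaSet q v = K ∧
        IsSProd p q u v w}

/-- `w` is the iterated shifted product `u⁽¹⁾ × ⋯ × u⁽ᵏ⁾` of the list `us` of signed
permutations with block sizes given by the list `ps`. -/
def IsMultiSProd (ps : List ℕ) (us : List (Equiv.Perm ℤ)) (w : Equiv.Perm ℤ) : Prop :=
  w ∈ SignedPerm ps.sum ∧ us.length = ps.length ∧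
  ∀ i < ps.length,
    us.getD i 1 ∈ SignedPerm (ps.getD i 0) ∧
    ∀ a : ℤ, ((ps.take i).sum : ℤ) < a → a ≤ ((ps.take i).sum : ℤ) + (ps.getD i 0 : ℤ) →
      w a = shiftFun ((ps.take i).sum) ((us.getD i 1) (a - ((ps.take i).sum : ℤ)))

/-- The subset `𝔅_{p₁} × 𝔅_{p₂} × ⋯ × 𝔅_{p_k}` of `𝔅_{p₁+⋯+p_k}`. -/
def MultiProdSet (ps : List ℕ) : Set (Equiv.Perm ℤ) :=
  {w | ∃ us, IsMultiSProd ps us w}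

/-- The `(L₂,…,L_k)`-component `𝔅_{p₁} × 𝔅_{p₂,L₂} × ⋯ × 𝔅_{p_k,L_k}`, where
`Ls.getD (i-1) ∅` is the prescribed negative index set of the `(i+1)`-st factor. -/
def ComponentSet (ps : List ℕ) (Ls : List (Finset ℤ)) : Set (Equiv.Perm ℤ) :=
  {w | ∃ us, IsMultiSProd ps us w ∧
        ∀ i, 1 ≤ i → i < ps.length →
          NegaSet (ps.getD i 0) (us.getD i 1) = Ls.getD (i - 1) ∅}

/-- `ξ ∈ Sh(p₁,…,p_k)`: a permutation in `𝔅_{p₁+⋯+p_k}` (all entries positive)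
increasing on each consecutive block. -/
def IsMultiShuffle (ps : List ℕ) (ξ : Equiv.Perm ℤ) : Prop :=
  ξ ∈ SignedPerm ps.sum ∧
  (∀ a : ℤ, 1 ≤ a → a ≤ (ps.sum : ℤ) → 0 < ξ a) ∧
  ∀ i < ps.length, ∀ a b : ℤ,
    ((ps.take i).sum : ℤ) < a → a < b → b ≤ ((ps.take i).sum : ℤ) + (ps.getD i 0 : ℤ) →
      ξ a < ξ b

section Aux
variable {n : ℕ} {w u v : Equiv.Perm ℤ}


lemma sp_zero (h : w ∈ SignedPerm n) : w 0 = 0 := by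
  have := h.1 0; simp at this; omega

lemma sp_abs_le (h : w ∈ SignedPerm n) {a : ℤ} (ha : |a| ≤ (n:ℤ)) : |w a| ≤ (n:ℤ) := by
  by_contra hc
  push_neg at hc
  have h3 : w (w a) = w a := h.2 _ hc
  have h4 : w a = a := w.injective h3
  rw [h4] at hc
  omega

lemma sp_inv (h : w ∈ SignedPerm n) : w⁻¹ ∈ SignedPerm n := by
  constructor
  · intro a
    apply w.injective
    rw [show w (w⁻¹ (-a)) = -a from w.apply_symm_apply _, h.1,
      show w (w⁻¹ a) = a from w.apply_symm_apply a]
  · intro a ha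
    have h2 := h.2 a ha
    conv_lhs => rw [← h2]
    simp

lemma sp_mul (hu : u ∈ SignedPerm n) (hv : v ∈ SignedPerm n) : v * u ∈ SignedPerm n := by
  constructor
  · intro a; simp [Equiv.Perm.mul_apply, hu.1, hv.1]
  · intro a ha
    simp only [Equiv.Perm.mul_apply, hu.2 a ha, hv.2 a ha]

end Aux

/-- The doubled inversion set over `[-n,n]`, omitting pairs `(-j,j)`. -/
noncomputable def DInvSet (n : ℕ) (w : Equiv.Perm ℤ) : Finset (ℤ × ℤ) :=
  ((Finset.Icc (-(n:ℤ)) (n:ℤ)) ×ˢ (Finset.Icc (-(n:ℤ)) (n:ℤ))).filter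
    fun p => p.1 < p.2 ∧ p.1 ≠ -p.2 ∧ w p.2 < w p.1

lemma dinv_card {n : ℕ} {w : Equiv.Perm ℤ} (h : w ∈ SignedPerm n) :
    (DInvSet n w).card = 2 * blen n w := by
  classical
  have h0 : w 0 = 0 := sp_zero h
  have hodd := h.1
  set D := DInvSet n w with hD
  have s1 := Finset.card_filter_add_card_filter_not (s := D) (p := fun p => 0 < p.1)
  set A1 := D.filter (fun p => ¬ 0 < p.1) with hA1
  have s2 := Finset.card_filter_add_card_filter_not (s := A1) (p := fun p => p.2 < 0)
  set A2 := A1.filter (fun p => ¬ p.2 < 0) with hA2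
  have s3 := Finset.card_filter_add_card_filter_not (s := A2) (p := fun p => p.1 = 0)
  set A3 := A2.filter (fun p => ¬ p.1 = 0) with hA3
  have s4 := Finset.card_filter_add_card_filter_not (s := A3) (p := fun p => p.2 = 0)
  set A4 := A3.filter (fun p => ¬ p.2 = 0) with hA4
  have s5 := Finset.card_filter_add_card_filter_not (s := A4) (p := fun p => -p.1 < p.2)
  have c1 : (D.filter (fun p => 0 < p.1)).card = (InvSet n w).card := by
    apply Finset.card_nbij' (i := fun p => p) (j := fun p => p)
    · rintro ⟨a,b⟩ hp
      simp only [Finset.mem_coe, hD, DInvSet, Finset.mem_filter, Finset.mem_product, Finset.mem_Icc,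
        InvSet, ne_eq, and_true, true_and] at hp ⊢
      omega
    · rintro ⟨a,b⟩ hp
      simp only [Finset.mem_coe, hD, DInvSet, Finset.mem_filter, Finset.mem_product, Finset.mem_Icc,
        InvSet, ne_eq, and_true, true_and] at hp ⊢
      omega
    · intro p _; rfl
    · intro p _; rfl
  have c2 : (A1.filter (fun p => p.2 < 0)).card = (InvSet n w).card := by
    apply Finset.card_nbij' (i := fun p => (-p.2, -p.1)) (j := fun p => (-p.2, -p.1))
    · rintro ⟨a,b⟩ hp
      simp only [Finset.mem_coe, hA1, hD, DInvSet, Finset.mem_filter, Finset.mem_product, Finset.mem_Icc,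
        InvSet, hodd, ne_eq, and_true, true_and] at hp ⊢
      omega
    · rintro ⟨a,b⟩ hp
      simp only [Finset.mem_coe, hA1, hD, DInvSet, Finset.mem_filter, Finset.mem_product, Finset.mem_Icc,
        InvSet, hodd, ne_eq, and_true, true_and] at hp ⊢
      omega
    · rintro ⟨a,b⟩ _; simp
    · rintro ⟨a,b⟩ _; simp
  have c3 : (A2.filter (fun p => p.1 = 0)).card = (NegaSet n w).card := by
    apply Finset.card_nbij' (i := fun p => p.2) (j := fun k => ((0:ℤ), k))
    · rintro ⟨a,b⟩ hp
      simp only [Finset.mem_coe, hA2, hA1, hD, DInvSet, Finset.mem_filter, Finset.mem_product, Finset.mem_Icc,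
        NegaSet, ne_eq, and_true, true_and] at hp ⊢
      obtain ⟨h', ha0⟩ := hp
      subst ha0
      rw [h0] at h'
      omega
    · intro k hk
      simp only [Finset.mem_coe, hA2, hA1, hD, DInvSet, Finset.mem_filter, Finset.mem_product, Finset.mem_Icc,
        NegaSet, h0, ne_eq, and_true, true_and] at hk ⊢
      omega
    · rintro ⟨a,b⟩ hp
      simp only [Finset.mem_coe, Finset.mem_filter] at hp
      have ha0 : a = 0 := hp.2
      simp [ha0]
    · intro k _; rfl
  have c4 : (A3.filter (fun p => p.2 = 0)).card = (NegaSet n w).card := by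
    apply Finset.card_nbij' (i := fun p => -p.1) (j := fun k => (-k, (0:ℤ)))
    · rintro ⟨a,b⟩ hp
      simp only [Finset.mem_coe, hA3, hA2, hA1, hD, DInvSet, Finset.mem_filter, Finset.mem_product,
        Finset.mem_Icc, NegaSet, hodd, ne_eq, and_true, true_and] at hp ⊢
      obtain ⟨h', hb0⟩ := hp
      subst hb0
      rw [h0] at h'
      omega
    · intro k hk
      simp only [Finset.mem_coe, hA3, hA2, hA1, hD, DInvSet, Finset.mem_filter, Finset.mem_product,
        Finset.mem_Icc, NegaSet, h0, hodd, ne_eq, and_true, true_and] at hk ⊢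
      omega
    · rintro ⟨a,b⟩ hp
      simp only [Finset.mem_coe, Finset.mem_filter] at hp
      have hb0 : b = 0 := hp.2
      simp [hb0]
    · intro k _; simp
  have c5 : (A4.filter (fun p => -p.1 < p.2)).card = (NspSet n w).card := by
    apply Finset.card_nbij' (i := fun p => (-p.1, p.2)) (j := fun q => (-q.1, q.2))
    · rintro ⟨a,b⟩ hp
      simp only [Finset.mem_coe, hA4, hA3, hA2, hA1, hD, DInvSet, Finset.mem_filter, Finset.mem_product,
        Finset.mem_Icc, NspSet, hodd, ne_eq, and_true, true_and] at hp ⊢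
      omega
    · rintro ⟨a,b⟩ hq
      simp only [Finset.mem_coe, hA4, hA3, hA2, hA1, hD, DInvSet, Finset.mem_filter, Finset.mem_product,
        Finset.mem_Icc, NspSet, hodd, ne_eq, and_true, true_and] at hq ⊢
      omega
    · rintro ⟨a,b⟩ _; simp
    · rintro ⟨a,b⟩ _; simp
  have c6 : (A4.filter (fun p => ¬ -p.1 < p.2)).card = (NspSet n w).card := by
    apply Finset.card_nbij' (i := fun p => (p.2, -p.1)) (j := fun q => (-q.2, q.1))
    · rintro ⟨a,b⟩ hp
      simp only [Finset.mem_coe, hA4, hA3, hA2, hA1, hD, DInvSet, Finset.mem_filter, Finset.mem_product,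
        Finset.mem_Icc, NspSet, hodd, ne_eq, and_true, true_and] at hp ⊢
      omega
    · rintro ⟨a,b⟩ hq
      simp only [Finset.mem_coe, hA4, hA3, hA2, hA1, hD, DInvSet, Finset.mem_filter, Finset.mem_product,
        Finset.mem_Icc, NspSet, hodd, ne_eq, and_true, true_and] at hq ⊢
      omega
    · rintro ⟨a,b⟩ _; simp
    · rintro ⟨a,b⟩ _; simp
  unfold blen
  omega

lemma wle_iff_dinv {n : ℕ} {u v : Equiv.Perm ℤ} (hu : u ∈ SignedPerm n)
    (hv : v ∈ SignedPerm n) : wle n u v ↔ DInvSet n u ⊆ DInvSet n v := by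
  classical
  set x := v * u⁻¹ with hxdef
  have hx : x ∈ SignedPerm n := sp_mul (sp_inv hu) hv
  have hvx : ∀ a : ℤ, v a = x (u a) := by
    intro a; simp [hxdef]
  set P : Finset (ℤ × ℤ) := ((Finset.Icc (-(n:ℤ)) (n:ℤ)) ×ˢ (Finset.Icc (-(n:ℤ)) (n:ℤ))).filter
      (fun p => p.1 < p.2 ∧ p.1 ≠ -p.2 ∧ x (max (u p.1) (u p.2)) < x (min (u p.1) (u p.2)))
      with hP
  have key : DInvSet n v = (DInvSet n u \ P) ∪ (P \ DInvSet n u) := by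
    ext ⟨a, b⟩
    simp only [DInvSet, hP, Finset.mem_union, Finset.mem_sdiff, Finset.mem_filter,
      Finset.mem_product, Finset.mem_Icc, ne_eq]
    constructor
    · rintro ⟨hbase, hab, hanb, hvba⟩
      rw [hvx, hvx] at hvba
      have hne : u a ≠ u b := fun e => (by omega : a ≠ b) (u.injective e)
      rcases lt_or_gt_of_ne hne with h' | h'
      · right
        constructor
        · refine ⟨hbase, hab, hanb, ?_⟩
          rwa [max_eq_right h'.le, min_eq_left h'.le]
        · rintro ⟨_, _, _, hba⟩
          omega
      · left
        constructor
        · exact ⟨hbase, hab, hanb, h'⟩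
        · rintro ⟨_, _, _, hc⟩
          rw [max_eq_left h'.le, min_eq_right h'.le] at hc
          have := hvba
          omega
    · have hne : a ≠ b → u a ≠ u b := fun hab e => hab (u.injective e)
      rintro (⟨⟨hbase, hab, hanb, huba⟩, hnP⟩ | ⟨⟨hbase, hab, hanb, hPc⟩, hnU⟩)
      · have hc : ¬ (x (max (u a) (u b)) < x (min (u a) (u b))) :=
          fun hc => hnP ⟨hbase, hab, hanb, hc⟩
        rw [max_eq_left huba.le, min_eq_right huba.le] at hc
        have hnex : x (u a) ≠ x (u b) := fun e => hne (by omega) (x.injective e)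
        refine ⟨hbase, hab, hanb, ?_⟩
        rw [hvx, hvx]
        omega
      · have hc : ¬ (u b < u a) := fun hc => hnU ⟨hbase, hab, hanb, hc⟩
        have h' : u a < u b := lt_of_le_of_ne (by omega) (hne (by omega))
        rw [max_eq_right h'.le, min_eq_left h'.le] at hPc
        refine ⟨hbase, hab, hanb, ?_⟩
        rw [hvx, hvx]
        omega
  have hdisj : Disjoint (DInvSet n u \ P) (P \ DInvSet n u) := by
    rw [Finset.disjoint_left]
    intro p hp hq
    exact (Finset.mem_sdiff.1 hq).2 (Finset.mem_sdiff.1 hp).1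
  have hcardv : (DInvSet n v).card = (DInvSet n u \ P).card + (P \ DInvSet n u).card := by
    rw [key, Finset.card_union_of_disjoint hdisj]
  have hcu := Finset.card_sdiff_add_card_inter (DInvSet n u) P
  have hcp := Finset.card_sdiff_add_card_inter P (DInvSet n u)
  have hic : (P ∩ DInvSet n u).card = (DInvSet n u ∩ P).card := by rw [Finset.inter_comm]
  have hPx : P.card = (DInvSet n x).card := by
    apply Finset.card_nbij'
      (i := fun p => (min (u p.1) (u p.2), max (u p.1) (u p.2)))
      (j := fun q => (min (u⁻¹ q.1) (u⁻¹ q.2), max (u⁻¹ q.1) (u⁻¹ q.2)))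
    · rintro ⟨a,b⟩ hp
      simp only [Finset.mem_coe, hP, DInvSet, Finset.mem_filter, Finset.mem_product, Finset.mem_Icc, ne_eq]
        at hp ⊢
      obtain ⟨⟨⟨ha1, ha2⟩, hb1, hb2⟩, hab, hanb, hcond⟩ := hp
      have hma := abs_le.1 (sp_abs_le hu (abs_le.2 ⟨ha1, ha2⟩))
      have hmb := abs_le.1 (sp_abs_le hu (abs_le.2 ⟨hb1, hb2⟩))
      have hne : u a ≠ u b := fun e => (by omega : a ≠ b) (u.injective e)
      have hne2 : u a ≠ - u b := by
        intro e
        rw [← hu.1 b] at e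
        exact hanb (u.injective e)
      rcases lt_or_gt_of_ne hne with h' | h'
      · rw [min_eq_left h'.le, max_eq_right h'.le] at hcond ⊢
        refine ⟨⟨⟨by omega, by omega⟩, by omega, by omega⟩, h', hne2, hcond⟩
      · rw [min_eq_right h'.le, max_eq_left h'.le] at hcond ⊢
        refine ⟨⟨⟨by omega, by omega⟩, by omega, by omega⟩, h', ?_, hcond⟩
        omega
    · rintro ⟨c,d⟩ hq
      simp only [Finset.mem_coe, hP, DInvSet, Finset.mem_filter, Finset.mem_product, Finset.mem_Icc, ne_eq]
        at hq ⊢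
      obtain ⟨⟨⟨hc1, hc2⟩, hd1, hd2⟩, hcd, hcnd, hxdc⟩ := hq
      have hui : u⁻¹ ∈ SignedPerm n := sp_inv hu
      have hma := abs_le.1 (sp_abs_le hui (abs_le.2 ⟨hc1, hc2⟩))
      have hmb := abs_le.1 (sp_abs_le hui (abs_le.2 ⟨hd1, hd2⟩))
      have huc : u (u⁻¹ c) = c := (u.apply_symm_apply c : u (u⁻¹ c) = c)
      have hud : u (u⁻¹ d) = d := (u.apply_symm_apply d : u (u⁻¹ d) = d)
      have hne : u⁻¹ c ≠ u⁻¹ d := fun e => (by omega : c ≠ d) (by rw [← huc, ← hud, e])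
      have hne2 : u⁻¹ c ≠ - u⁻¹ d := by
        intro e
        rw [← hui.1 d] at e
        exact hcnd ((u⁻¹).injective e)
      rcases lt_or_gt_of_ne hne with h' | h'
      · rw [min_eq_left h'.le, max_eq_right h'.le]
        refine ⟨⟨⟨by omega, by omega⟩, by omega, by omega⟩, h', hne2, ?_⟩
        rw [huc, hud, min_eq_left hcd.le, max_eq_right hcd.le]
        exact hxdc
      · rw [min_eq_right h'.le, max_eq_left h'.le]
        refine ⟨⟨⟨by omega, by omega⟩, by omega, by omega⟩, h', by omega, ?_⟩
        rw [huc, hud, min_eq_right hcd.le, max_eq_left hcd.le]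
        exact hxdc
    · rintro ⟨a,b⟩ hp
      simp only [Finset.mem_coe, hP, Finset.mem_filter, Finset.mem_product, Finset.mem_Icc, ne_eq] at hp
      obtain ⟨_, hab, _, _⟩ := hp
      dsimp only
      have hne : u a ≠ u b := fun e => (by omega : a ≠ b) (u.injective e)
      rcases lt_or_gt_of_ne hne with h' | h'
      · rw [min_eq_left h'.le, max_eq_right h'.le]
        simp [hab.le]
      · rw [min_eq_right h'.le, max_eq_left h'.le]
        simp [hab.le]
    · rintro ⟨c,d⟩ hq
      simp only [Finset.mem_coe, DInvSet, Finset.mem_filter, Finset.mem_product, Finset.mem_Icc, ne_eq] at hq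
      obtain ⟨_, hcd, _, _⟩ := hq
      dsimp only
      have hne : u⁻¹ c ≠ u⁻¹ d := fun e => (by omega : c ≠ d)
        (by rw [← show u (u⁻¹ c) = c from u.apply_symm_apply c, ← show u (u⁻¹ d) = d from u.apply_symm_apply d, e])
      rcases lt_or_gt_of_ne hne with h' | h'
      · rw [min_eq_left h'.le, max_eq_right h'.le]
        simp [hcd.le]
      · rw [min_eq_right h'.le, max_eq_left h'.le]
        simp [hcd.le]
  have hsub_iff : DInvSet n u ⊆ DInvSet n v ↔ (DInvSet n u ∩ P) = ∅ := by
    constructor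
    · intro hs
      rw [Finset.eq_empty_iff_forall_notMem]
      intro p hp
      have h1 := Finset.mem_inter.1 hp
      have h2 := hs h1.1
      rw [key] at h2
      rcases Finset.mem_union.1 h2 with h3 | h3
      · exact (Finset.mem_sdiff.1 h3).2 h1.2
      · exact (Finset.mem_sdiff.1 h3).2 h1.1
    · intro he p hp
      rw [key]
      have hnp : p ∉ P := by
        rw [Finset.eq_empty_iff_forall_notMem] at he
        exact fun hP' => he p (Finset.mem_inter.2 ⟨hp, hP'⟩)
      exact Finset.mem_union_left _ (Finset.mem_sdiff.2 ⟨hp, hnp⟩)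
  have e1 := dinv_card hu
  have e2 := dinv_card hv
  have e3 := dinv_card hx
  unfold wle
  rw [← hxdef, hsub_iff]
  constructor
  · intro hl
    rw [← Finset.card_eq_zero]
    omega
  · intro hs
    rw [← Finset.card_eq_zero] at hs
    omega

lemma cmp_aux (X Y X' Y' : ℤ) (h1 : X < 0 ↔ X' < 0) (h2 : 0 < X ↔ 0 < X')
    (h3 : Y < 0 ↔ Y' < 0) (h4 : 0 < Y ↔ 0 < Y') (h5 : |X| < |Y| ↔ |X'| < |Y'|)
    (h6 : X ≠ Y) (h7 : X' ≠ Y') : (X < Y ↔ X' < Y') := by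
  have aX := abs_choice X; have aY := abs_choice Y
  have aX' := abs_choice X'; have aY' := abs_choice Y'
  have bX := abs_nonneg X; have bY := abs_nonneg Y
  have bX' := abs_nonneg X'; have bY' := abs_nonneg Y'
  omega

def phiW (i r : ℤ) : ℤ := if 0 < r then i - 1 + r else if r < 0 then r - (i - 1) else 0

lemma phiW_pos (i : ℤ) {r : ℤ} (h : 0 < r) : phiW i r = i - 1 + r := by simp [phiW, h]

lemma phiW_zero (i : ℤ) : phiW i 0 = 0 := by simp [phiW]

lemma phiW_odd (i r : ℤ) : phiW i (-r) = - phiW i r := by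
  unfold phiW; split_ifs <;> omega

lemma phiW_mono {i : ℤ} (hi : 1 ≤ i) {r s : ℤ} (h : r < s) : phiW i r < phiW i s := by
  unfold phiW; split_ifs <;> omega

lemma phiW_bound {i : ℤ} {m n : ℕ} (hi : 1 ≤ i) (hmn : i - 1 + (m:ℤ) ≤ n) {r : ℤ}
    (h1 : -(m:ℤ) ≤ r) (h2 : r ≤ m) : -(n:ℤ) ≤ phiW i r ∧ phiW i r ≤ n := by
  unfold phiW; split_ifs <;> omega

lemma sts_window_lt {n m : ℕ} {w sw : Equiv.Perm ℤ} {i : ℤ}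
    (hw : w ∈ SignedPerm n) (hi : 1 ≤ i) (hmn : i - 1 + (m:ℤ) ≤ n)
    (hsw : IsSts m (fun r => w (i - 1 + r)) sw) :
    ∀ r s : ℤ, -(m:ℤ) ≤ r → r ≤ m → -(m:ℤ) ≤ s → s ≤ m → r ≠ s →
      (sw r < sw s ↔ w (phiW i r) < w (phiW i s)) := by
  have hswm : sw ∈ SignedPerm m := hsw.1
  have hsw0 : sw 0 = 0 := sp_zero hswm
  have hw0 : w 0 = 0 := sp_zero hw
  have hswodd := hswm.1
  have hwodd := hw.1
  have hWnz : ∀ t : ℤ, 1 ≤ t → w (i - 1 + t) ≠ 0 := by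
    intro t h1 he
    have h2 : w (i - 1 + t) = w 0 := by rw [he, hw0]
    have := w.injective h2
    omega
  have hSnz : ∀ t : ℤ, 1 ≤ t → sw t ≠ 0 := by
    intro t h1 he
    have h2 : sw t = sw 0 := by rw [he, hsw0]
    have := sw.injective h2
    omega
  have hsgn : ∀ t : ℤ, 1 ≤ t → t ≤ (m:ℤ) →
      ((sw t < 0 ↔ w (i - 1 + t) < 0) ∧ (0 < sw t ↔ 0 < w (i - 1 + t))) := by
    intro t h1 h2
    have hs := hsw.2.1 t h1 h2
    simp only [] at hs
    have n1 := hSnz t h1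
    have n2 := hWnz t h1
    exact ⟨hs, by omega⟩
  have hWabsne : ∀ t t' : ℤ, 1 ≤ t → 1 ≤ t' → t ≠ t' →
      |w (i - 1 + t)| ≠ |w (i - 1 + t')| := by
    intro t t' h1 h2 hne he
    rcases abs_eq_abs.1 he with e | e
    · exact hne (by have := w.injective e; omega)
    · rw [← hwodd] at e
      have := w.injective e
      omega
  have hSabsne : ∀ t t' : ℤ, 1 ≤ t → 1 ≤ t' → t ≠ t' → |sw t| ≠ |sw t'| := by
    intro t t' h1 h2 hne he
    rcases abs_eq_abs.1 he with e | e
    · exact hne (sw.injective e)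
    · rw [← hswodd] at e
      have := sw.injective e
      omega
  have habs : ∀ t t' : ℤ, 1 ≤ t → t ≤ (m:ℤ) → 1 ≤ t' → t' ≤ (m:ℤ) → t ≠ t' →
      (|sw t| < |sw t'| ↔ |w (i - 1 + t)| < |w (i - 1 + t')|) := by
    intro t t' h1 h2 h3 h4 hne
    have hw1 := hWabsne t t' h1 h3 hne
    have hs1 := hSabsne t t' h1 h3 hne
    rcases lt_or_gt_of_ne hne with h' | h'
    · have hh := hsw.2.2 t t' h1 h' h4
      simp only [] at hh
      omega
    · have hh := hsw.2.2 t' t h3 h' h2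
      simp only [] at hh
      omega
  have pack : ∀ t : ℤ, -(m:ℤ) ≤ t → t ≤ m → t ≠ 0 →
      ((sw t < 0 ↔ w (phiW i t) < 0) ∧ (0 < sw t ↔ 0 < w (phiW i t)) ∧
        |sw t| = |sw (|t|)| ∧ |w (phiW i t)| = |w (i - 1 + (|t|))|) := by
    intro t h1 h2 h3
    rcases lt_or_gt_of_ne h3 with h | h
    · have habs_t : |t| = -t := abs_of_neg h
      have e1 : sw t = - sw (-t) := by
        have := hswodd (-t); simp at this; omega
      have e2 : phiW i t = - phiW i (-t) := by
        have := phiW_odd i (-t); simp at this; omega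
      have e3 : w (phiW i t) = - w (phiW i (-t)) := by rw [e2, hwodd]
      have hp : phiW i (-t) = i - 1 + (-t) := phiW_pos i (by omega)
      have hg := hsgn (-t) (by omega) (by omega)
      rw [habs_t]
      refine ⟨?_, ?_, ?_, ?_⟩
      · rw [e1, e3, hp]; omega
      · rw [e1, e3, hp]; omega
      · rw [e1, abs_neg]
      · rw [e3, abs_neg, hp]
    · have habs_t : |t| = t := abs_of_pos h
      have hp : phiW i t = i - 1 + t := phiW_pos i h
      have hg := hsgn t (by omega) (by omega)
      rw [habs_t, hp]
      exact ⟨hg.1, hg.2, rfl, rfl⟩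
  intro r s hr1 hr2 hs1 hs2 hrs
  have hXY : sw r ≠ sw s := fun e => hrs (sw.injective e)
  have hphine : phiW i r ≠ phiW i s := by
    rcases lt_or_gt_of_ne hrs with h | h
    · exact ne_of_lt (phiW_mono hi h)
    · exact (ne_of_lt (phiW_mono hi h)).symm
  have hXY' : w (phiW i r) ≠ w (phiW i s) := fun e => hphine (w.injective e)
  have hr12 : (sw r < 0 ↔ w (phiW i r) < 0) ∧ (0 < sw r ↔ 0 < w (phiW i r)) := by
    by_cases hr0 : r = 0
    · subst hr0; rw [hsw0, phiW_zero, hw0]; omega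
    · exact ⟨(pack r hr1 hr2 hr0).1, (pack r hr1 hr2 hr0).2.1⟩
  have hs12 : (sw s < 0 ↔ w (phiW i s) < 0) ∧ (0 < sw s ↔ 0 < w (phiW i s)) := by
    by_cases hs0 : s = 0
    · subst hs0; rw [hsw0, phiW_zero, hw0]; omega
    · exact ⟨(pack s hs1 hs2 hs0).1, (pack s hs1 hs2 hs0).2.1⟩
  have h5 : (|sw r| < |sw s| ↔ |w (phiW i r)| < |w (phiW i s)|) := by
    by_cases hr0 : r = 0
    · subst hr0
      rw [hsw0, phiW_zero, hw0]
      simp only [abs_zero]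
      have hs0 : s ≠ 0 := fun e => hrs e.symm
      have as2 := abs_choice s
      have as3 := abs_nonneg s
      have p := pack s hs1 hs2 hs0
      have n1 := abs_pos.2 (hSnz (|s|) (by omega))
      have n2 := abs_pos.2 (hWnz (|s|) (by omega))
      omega
    · by_cases hs0 : s = 0
      · subst hs0
        rw [hsw0, phiW_zero, hw0]
        simp only [abs_zero]
        have b1 := abs_nonneg (sw r)
        have b2 := abs_nonneg (w (phiW i r))
        omega
      · have ar := abs_choice r
        have ar3 := abs_nonneg r
        have as2 := abs_choice s
        have as3 := abs_nonneg s
        have pr := pack r hr1 hr2 hr0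
        have ps := pack s hs1 hs2 hs0
        by_cases habs' : |r| = |s|
        · have e : |sw r| = |sw s| := by rw [pr.2.2.1, ps.2.2.1, habs']
          have e' : |w (phiW i r)| = |w (phiW i s)| := by rw [pr.2.2.2, ps.2.2.2, habs']
          omega
        · have h' := habs (|r|) (|s|) (by omega) (by omega) (by omega) (by omega) habs'
          rw [pr.2.2.1, ps.2.2.1, pr.2.2.2, ps.2.2.2]
          exact h'
  exact cmp_aux _ _ _ _ hr12.1 hr12.2 hs12.1 hs12.2 h5 hXY hXY'


/-- If `u ≤ v` in the weak order on `𝔅ₙ` and `1 ≤ i < j ≤ n`, then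
`sts(u_i ⋯ u_j) ≤ sts(v_i ⋯ v_j)` in the weak order on `𝔅_{j-i+1}`. -/
theorem sts_monotone (n : ℕ) (u v : Equiv.Perm ℤ) (hu : u ∈ SignedPerm n)
    (hv : v ∈ SignedPerm n) (huv : wle n u v) (i j : ℤ) (h1 : 1 ≤ i) (hij : i < j)
    (hj : j ≤ (n : ℤ)) (su sv : Equiv.Perm ℤ)
    (hsu : IsSts (j - i + 1).toNat (fun r => u (i - 1 + r)) su)
    (hsv : IsSts (j - i + 1).toNat (fun r => v (i - 1 + r)) sv) :
    wle (j - i + 1).toNat su sv := by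
  set m := (j - i + 1).toNat with hmdef
  have hm : (m : ℤ) = j - i + 1 := Int.toNat_of_nonneg (by omega)
  have hmn : i - 1 + (m : ℤ) ≤ (n : ℤ) := by omega
  have hwu := sts_window_lt hu h1 hmn hsu
  have hwv := sts_window_lt hv h1 hmn hsv
  have hsub : DInvSet n u ⊆ DInvSet n v := (wle_iff_dinv hu hv).1 huv
  refine (wle_iff_dinv hsu.1 hsv.1).2 ?_
  rintro ⟨r, s⟩ hp
  simp only [DInvSet, Finset.mem_filter, Finset.mem_product, Finset.mem_Icc, ne_eq] at hp ⊢
  obtain ⟨⟨⟨hr1, hr2⟩, hs1, hs2⟩, hrs, hrns, hlt⟩ := hp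
  have hlt' : u (phiW i s) < u (phiW i r) :=
    (hwu s r hs1 hs2 hr1 hr2 (by omega)).1 hlt
  have hbr := phiW_bound h1 hmn hr1 hr2
  have hbs := phiW_bound h1 hmn hs1 hs2
  have hmem : (phiW i r, phiW i s) ∈ DInvSet n u := by
    simp only [DInvSet, Finset.mem_filter, Finset.mem_product, Finset.mem_Icc, ne_eq]
    refine ⟨⟨⟨hbr.1, hbr.2⟩, hbs.1, hbs.2⟩, phiW_mono h1 hrs, ?_, hlt'⟩
    intro e
    rw [← phiW_odd] at e
    rcases lt_or_gt_of_ne (show r ≠ -s from hrns) with h' | h'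
    · exact absurd e (ne_of_lt (phiW_mono h1 h'))
    · exact absurd e.symm (ne_of_lt (phiW_mono h1 h'))
  have hmem2 := hsub hmem
  simp only [DInvSet, Finset.mem_filter, Finset.mem_product, Finset.mem_Icc, ne_eq] at hmem2
  have hvlt : v (phiW i s) < v (phiW i r) := hmem2.2.2.2
  exact ⟨⟨⟨hr1, hr2⟩, hs1, hs2⟩, hrs, hrns, (hwv s r hs1 hs2 hr1 hr2 (by omega)).2 hvlt⟩
end
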